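/- Let T ⊂ ℝ² be the triod, i.e. the union of the three segments from the origin O to the points A, B, C, where A, B, C are three distinct unit vectors. There exists a continuous map p : D² → T such that p(x) ≠ p(-x) for every x in the boundary circle S¹ = ∂D². -/

import Mathlib

noncomputable section TriodAux

local notation "E" => EuclideanSpace ℝ (Fin 2)

private def trf (t : ℝ) : ℝ := max (t - 1/2) 0

private lemma trf_nonneg (t : ℝ) : 0 ≤ trf t := le_max_right _ _

private lemma trf_eq_zero_iff {t : ℝ} : trf t = 0 ↔ t ≤ 1/2 := by
  unfold trf
  constructor
  · intro h
    by_contra hc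
    push_neg at hc
    have h2 : (0:ℝ) < max (t - 1/2) 0 := lt_of_lt_of_le (by linarith) (le_max_left _ _)
    rw [h] at h2
    exact lt_irrefl 0 h2
  · intro h
    exact max_eq_right (by linarith)

private lemma trf_pos_iff {t : ℝ} : 0 < trf t ↔ 1/2 < t := by
  rcases (trf_nonneg t).lt_or_eq with h | h
  · constructor
    · intro _
      by_contra hc
      push_neg at hc
      rw [trf_eq_zero_iff.2 hc] at h
      exact lt_irrefl 0 h
    · intro _; exact h
  · constructor
    · intro hh; rw [← h] at hh; exact absurd hh (lt_irrefl 0)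
    · intro hh
      exact lt_of_lt_of_le (by linarith) (le_max_left _ _)

private lemma trf_cont : Continuous trf :=
  (continuous_id.sub continuous_const).max continuous_const

private lemma trf_le_one {t : ℝ} (h : t ≤ 1) : trf t ≤ 1 :=
  max_le (by linarith) (by norm_num)

private lemma normsq_two (x : E) : (x 0)^2 + (x 1)^2 = ‖x‖^2 := by
  have h : ‖x‖ = Real.sqrt ((x 0)^2 + (x 1)^2) := by
    rw [EuclideanSpace.norm_eq]
    congr 1
    simp [Fin.sum_univ_two, sq_abs]
  rw [h, Real.sq_sqrt (by positivity)]

end TriodAux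

/-- There is a continuous map from the disk `D²` to the triod `T` which does not
identify any pair of antipodal boundary points. -/
theorem exists_map_disk_to_triod_no_antipodes_identified
    (A B C : EuclideanSpace ℝ (Fin 2))
    (hA : ‖A‖ = 1) (hB : ‖B‖ = 1) (hC : ‖C‖ = 1)
    (hAB : A ≠ B) (hAC : A ≠ C) (hBC : B ≠ C) :
    ∃ p : EuclideanSpace ℝ (Fin 2) → EuclideanSpace ℝ (Fin 2),
      ContinuousOn p (Metric.closedBall 0 1) ∧
      Set.MapsTo p (Metric.closedBall 0 1)
        (segment ℝ 0 A ∪ segment ℝ 0 B ∪ segment ℝ 0 C) ∧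
      ∀ x ∈ Metric.sphere (0 : EuclideanSpace ℝ (Fin 2)) 1, p x ≠ p (-x) := by
  set s3 : ℝ := Real.sqrt 3 with hs3def
  have hs3 : s3 ^ 2 = 3 := Real.sq_sqrt (by norm_num)
  set l0 : EuclideanSpace ℝ (Fin 2) → ℝ := fun x => x 0 with hl0
  set l1 : EuclideanSpace ℝ (Fin 2) → ℝ := fun x => -(x 0)/2 + (s3/2) * x 1 with hl1
  set l2 : EuclideanSpace ℝ (Fin 2) → ℝ := fun x => -(x 0)/2 - (s3/2) * x 1 with hl2
  have lneg0 : ∀ x : EuclideanSpace ℝ (Fin 2), l0 (-x) = -(l0 x) := fun x => rfl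
  have lneg1 : ∀ x : EuclideanSpace ℝ (Fin 2), l1 (-x) = -(l1 x) := by
    intro x; simp [hl1]; ring
  have lneg2 : ∀ x : EuclideanSpace ℝ (Fin 2), l2 (-x) = -(l2 x) := by
    intro x; simp [hl2]; ring
  -- at most one of the three functionals exceeds 1/2 on the closed disk
  have key : ∀ x : EuclideanSpace ℝ (Fin 2), ‖x‖ ≤ 1 →
      (trf (l0 x) = 0 ∧ trf (l1 x) = 0 ∧ trf (l2 x) = 0) ∨
      (0 < trf (l0 x) ∧ trf (l1 x) = 0 ∧ trf (l2 x) = 0) ∨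
      (trf (l0 x) = 0 ∧ 0 < trf (l1 x) ∧ trf (l2 x) = 0) ∨
      (trf (l0 x) = 0 ∧ trf (l1 x) = 0 ∧ 0 < trf (l2 x)) := by
    intro x hx
    have hn : (x 0)^2 + (x 1)^2 ≤ 1 := by
      rw [normsq_two x]
      nlinarith [norm_nonneg x]
    have h01 : ¬(1/2 < l0 x ∧ 1/2 < l1 x) := by
      rintro ⟨h1, h2⟩
      simp only [hl0, hl1] at h1 h2
      nlinarith [sq_nonneg (s3 * x 0 - x 1), sq_nonneg (x 0 + s3 * x 1 - 2)]
    have h02 : ¬(1/2 < l0 x ∧ 1/2 < l2 x) := by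
      rintro ⟨h1, h2⟩
      simp only [hl0, hl2] at h1 h2
      nlinarith [sq_nonneg (s3 * x 0 + x 1), sq_nonneg (x 0 - s3 * x 1 - 2)]
    have h12 : ¬(1/2 < l1 x ∧ 1/2 < l2 x) := by
      rintro ⟨h1, h2⟩
      simp only [hl1, hl2] at h1 h2
      nlinarith [sq_nonneg (x 1)]
    rcases (trf_nonneg (l0 x)).lt_or_eq with h0 | h0 <;>
      rcases (trf_nonneg (l1 x)).lt_or_eq with h1 | h1 <;>
      rcases (trf_nonneg (l2 x)).lt_or_eq with h2 | h2
    · exact absurd ⟨trf_pos_iff.1 h0, trf_pos_iff.1 h1⟩ h01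
    · exact absurd ⟨trf_pos_iff.1 h0, trf_pos_iff.1 h1⟩ h01
    · exact absurd ⟨trf_pos_iff.1 h0, trf_pos_iff.1 h2⟩ h02
    · exact Or.inr (Or.inl ⟨h0, h1.symm, h2.symm⟩)
    · exact absurd ⟨trf_pos_iff.1 h1, trf_pos_iff.1 h2⟩ h12
    · exact Or.inr (Or.inr (Or.inl ⟨h0.symm, h1, h2.symm⟩))
    · exact Or.inr (Or.inr (Or.inr ⟨h0.symm, h1.symm, h2⟩))
    · exact Or.inl ⟨h0.symm, h1.symm, h2.symm⟩
  have hA0 : A ≠ 0 := by intro h; rw [h, norm_zero] at hA; norm_num at hA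
  have hB0 : B ≠ 0 := by intro h; rw [h, norm_zero] at hB; norm_num at hB
  have hC0 : C ≠ 0 := by intro h; rw [h, norm_zero] at hC; norm_num at hC
  have legs : ∀ (V W : EuclideanSpace ℝ (Fin 2)), ‖V‖ = 1 → ‖W‖ = 1 → V ≠ W →
      ∀ s t : ℝ, 0 < s → 0 < t → s • V ≠ t • W := by
    intro V W hV hW hVW s t hs ht h
    have hst : s = t := by
      have h2 := congrArg norm h
      rw [norm_smul, norm_smul, hV, hW, mul_one, mul_one] at h2
      rw [Real.norm_eq_abs, Real.norm_eq_abs] at h2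
      rwa [abs_of_pos hs, abs_of_pos ht] at h2
    subst hst
    exact hVW (smul_right_injective _ (ne_of_gt hs) h)
  refine ⟨fun x => trf (l0 x) • A + trf (l1 x) • B + trf (l2 x) • C, ?_, ?_, ?_⟩
  · -- continuity
    apply Continuous.continuousOn
    have c0 : Continuous l0 := PiLp.continuous_apply 2 _ 0
    have c1 : Continuous l1 := by
      apply Continuous.add
      · exact ((PiLp.continuous_apply 2 _ 0).neg).div_const 2
      · exact continuous_const.mul (PiLp.continuous_apply 2 _ 1)
    have c2 : Continuous l2 := by
      apply Continuous.sub
      · exact ((PiLp.continuous_apply 2 _ 0).neg).div_const 2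
      · exact continuous_const.mul (PiLp.continuous_apply 2 _ 1)
    exact (((trf_cont.comp c0).smul continuous_const).add
      ((trf_cont.comp c1).smul continuous_const)).add
      ((trf_cont.comp c2).smul continuous_const)
  · -- maps to the triod
    intro x hx
    rw [Metric.mem_closedBall, dist_zero_right] at hx
    have hn : (x 0)^2 + (x 1)^2 ≤ 1 := by
      rw [normsq_two x]; nlinarith [norm_nonneg x]
    have hub0 : l0 x ≤ 1 := by
      simp only [hl0]; nlinarith [sq_nonneg (x 1)]
    have hub1 : l1 x ≤ 1 := by
      simp only [hl1]; nlinarith [sq_nonneg (s3 * x 0 + x 1), hs3, hn]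
    have hub2 : l2 x ≤ 1 := by
      simp only [hl2]; nlinarith [sq_nonneg (s3 * x 0 - x 1), hs3, hn]
    have seg : ∀ (V : EuclideanSpace ℝ (Fin 2)) (c : ℝ), 0 ≤ c → c ≤ 1 →
        c • V ∈ segment ℝ 0 V := by
      intro V c hc0 hc1
      exact ⟨1 - c, c, by linarith, hc0, by ring, by simp⟩
    rcases key x hx with ⟨e0, e1, e2⟩ | ⟨e0, e1, e2⟩ | ⟨e0, e1, e2⟩ | ⟨e0, e1, e2⟩
    · simp only [e0, e1, e2, zero_smul, add_zero]
      exact Or.inl (Or.inl (left_mem_segment ℝ 0 A))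
    · simp only [e1, e2, zero_smul, add_zero]
      exact Or.inl (Or.inl (seg A _ (trf_nonneg _) (trf_le_one hub0)))
    · simp only [e0, e2, zero_smul, add_zero, zero_add]
      exact Or.inl (Or.inr (seg B _ (trf_nonneg _) (trf_le_one hub1)))
    · simp only [e0, e1, zero_smul, add_zero, zero_add]
      exact Or.inr (seg C _ (trf_nonneg _) (trf_le_one hub2))
  · -- antipodal points are not identified
    intro x hx heq
    rw [mem_sphere_zero_iff_norm] at hx
    have hn : (x 0)^2 + (x 1)^2 = 1 := by rw [normsq_two x, hx]; norm_num
    simp only [] at heq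
    have sameleg : ∀ li : EuclideanSpace ℝ (Fin 2) → ℝ,
        (li (-x) = -(li x)) → 0 < trf (li x) → 0 < trf (li (-x)) → False := by
      intro li hli h1 h2
      have a1 := trf_pos_iff.1 h1
      have a2 := trf_pos_iff.1 h2
      rw [hli] at a2
      linarith
    have K1 := key x hx.le
    have K2 := key (-x) (by rw [norm_neg, hx])
    rcases K1 with ⟨e0, e1, e2⟩ | ⟨e0, e1, e2⟩ | ⟨e0, e1, e2⟩ | ⟨e0, e1, e2⟩ <;>
      rcases K2 with ⟨g0, g1, g2⟩ | ⟨g0, g1, g2⟩ | ⟨g0, g1, g2⟩ | ⟨g0, g1, g2⟩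
    -- case 1,1 : everything ≤ 1/2 : contradicts ‖x‖ = 1
    · have b0 := trf_eq_zero_iff.1 e0
      have b1 := trf_eq_zero_iff.1 e1
      have b2 := trf_eq_zero_iff.1 e2
      have c0 := trf_eq_zero_iff.1 g0
      have c1 := trf_eq_zero_iff.1 g1
      have c2 := trf_eq_zero_iff.1 g2
      rw [lneg0] at c0; rw [lneg1] at c1; rw [lneg2] at c2
      simp only [hl0, hl1, hl2] at b0 b1 b2 c0 c1 c2
      nlinarith [hs3, Real.sqrt_nonneg 3]
    · rw [e0, e1, e2, g1, g2] at heq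
      simp only [zero_smul, add_zero, zero_add] at heq
      exact absurd heq.symm (smul_ne_zero (ne_of_gt g0) hA0)
    · rw [e0, e1, e2, g0, g2] at heq
      simp only [zero_smul, add_zero, zero_add] at heq
      exact absurd heq.symm (smul_ne_zero (ne_of_gt g1) hB0)
    · rw [e0, e1, e2, g0, g1] at heq
      simp only [zero_smul, add_zero, zero_add] at heq
      exact absurd heq.symm (smul_ne_zero (ne_of_gt g2) hC0)
    · rw [e1, e2, g0, g1, g2] at heq
      simp only [zero_smul, add_zero, zero_add] at heq
      exact absurd heq (smul_ne_zero (ne_of_gt e0) hA0)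
    · exact sameleg l0 (lneg0 x) e0 g0
    · rw [e1, e2, g0, g2] at heq
      simp only [zero_smul, add_zero, zero_add] at heq
      exact legs A B hA hB hAB _ _ e0 g1 heq
    · rw [e1, e2, g0, g1] at heq
      simp only [zero_smul, add_zero, zero_add] at heq
      exact legs A C hA hC hAC _ _ e0 g2 heq
    · rw [e0, e2, g0, g1, g2] at heq
      simp only [zero_smul, add_zero, zero_add] at heq
      exact absurd heq (smul_ne_zero (ne_of_gt e1) hB0)
    · rw [e0, e2, g1, g2] at heq
      simp only [zero_smul, add_zero, zero_add] at heq
      exact legs B A hB hA hAB.symm _ _ e1 g0 heq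
    · exact sameleg l1 (lneg1 x) e1 g1
    · rw [e0, e2, g0, g1] at heq
      simp only [zero_smul, add_zero, zero_add] at heq
      exact legs B C hB hC hBC _ _ e1 g2 heq
    · rw [e0, e1, g0, g1, g2] at heq
      simp only [zero_smul, add_zero, zero_add] at heq
      exact absurd heq (smul_ne_zero (ne_of_gt e2) hC0)
    · rw [e0, e1, g1, g2] at heq
      simp only [zero_smul, add_zero, zero_add] at heq
      exact legs C A hC hA hAC.symm _ _ e2 g0 heq
    · rw [e0, e1, g0, g2] at heq
      simp only [zero_smul, add_zero, zero_add] at heq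
      exact legs C B hC hB hBC.symm _ _ e2 g1 heq
    · exact sameleg l2 (lneg2 x) e2 g2
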